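/- Let m ≥ 2 be even, n divisible by m/2, N = 2n/m, and let k be an integer with 2 ≤ k ≤ N/2. The Pareto front F of m-OJZJ_k has cardinality |F| = (N − 2k + 3)^{m/2}. -/

import Mathlib

/-- Number of one-bits of a block `b ∈ {0,1}^N`. -/
def ones {N : ℕ} (b : Fin N → Bool) : ℕ :=
  (Finset.univ.filter fun i => b i = true).card

/-- Number of zero-bits of a block `b ∈ {0,1}^N`. -/
def zeros {N : ℕ} (b : Fin N → Bool) : ℕ :=
  (Finset.univ.filter fun i => b i = false).card

/-- A search point in `{0,1}^n` with `n = M * N`, presented as `M` blocks of length `N`. -/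
abbrev Point (M N : ℕ) := Fin M → Fin N → Bool

/-- The `m`-objective function `m`-OJZJ_k with `m = 2 * M` objectives (0-indexed:
objective `i` corresponds to the 1-indexed objective `i+1`, so even `i` is the
"ones" objective and odd `i` the "zeros" objective of block `i / 2`). -/
def mOJZJ (N k : ℕ) {M : ℕ} (x : Point M N) (i : Fin (2 * M)) : ℕ :=
  let b := x ⟨i.val / 2, by have := i.isLt; omega⟩
  if i.val % 2 = 0 then
    if ones b ≤ N - k ∨ ones b = N then k + ones b else N - ones b
  else
    if zeros b ≤ N - k ∨ zeros b = N then k + zeros b else N - zeros b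

/-- `x` weakly dominates `y`. -/
def weaklyDom (N k : ℕ) {M : ℕ} (x y : Point M N) : Prop :=
  ∀ i, mOJZJ N k y i ≤ mOJZJ N k x i

/-- `x` dominates `y`. -/
def dom (N k : ℕ) {M : ℕ} (x y : Point M N) : Prop :=
  weaklyDom N k x y ∧ ∃ i, mOJZJ N k y i < mOJZJ N k x i

/-- `x` is Pareto-optimal: no search point dominates it. -/
def paretoOptimal (N k : ℕ) {M : ℕ} (x : Point M N) : Prop :=
  ¬ ∃ y : Point M N, dom N k y x

/-- The Pareto front: the set of fitness vectors of Pareto-optimal search points. -/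
def paretoFront (N k M : ℕ) : Set (Fin (2 * M) → ℕ) :=
  {v | ∃ x : Point M N, paretoOptimal N k x ∧ mOJZJ N k x = v}

namespace PFC

lemma ones_add_zeros {N : ℕ} (b : Fin N → Bool) : ones b + zeros b = N := by
  classical
  have h := Finset.card_filter_add_card_filter_not
    (s := (Finset.univ : Finset (Fin N))) (p := fun i => b i = true)
  simp only [Finset.card_univ, Fintype.card_fin] at h
  unfold ones zeros
  simp only [Bool.not_eq_true] at h
  exact h

lemma exists_ones {N : ℕ} (o : ℕ) (ho : o ≤ N) : ∃ b : Fin N → Bool, ones b = o := by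
  refine ⟨fun i => decide (i.val < o), ?_⟩
  unfold ones
  simp only [decide_eq_true_eq]
  rcases eq_or_lt_of_le ho with rfl | h
  · rw [Finset.filter_true_of_mem (fun i _ => i.isLt)]
    simp
  · have : (Finset.univ.filter fun i : Fin N => i.val < o) = Finset.Iio ⟨o, h⟩ := by
      ext i
      simp [Fin.lt_def]
    rw [this, Fin.card_Iio]

/-- per-objective value function -/
def F1 (N k o : ℕ) : ℕ := if o ≤ N - k ∨ o = N then k + o else N - o

/-- good (Pareto-optimal) ones-counts of a block -/
def good (N k o : ℕ) : Prop := o = 0 ∨ o = N ∨ (k ≤ o ∧ o + k ≤ N)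

lemma mOJZJ_eq (N k : ℕ) {M : ℕ} (x : Point M N) (i : Fin (2 * M)) :
    mOJZJ N k x i =
      if i.val % 2 = 0 then F1 N k (ones (x ⟨i.val / 2, by have := i.isLt; omega⟩))
      else F1 N k (zeros (x ⟨i.val / 2, by have := i.isLt; omega⟩)) := rfl

lemma mOJZJ_even (N k : ℕ) {M : ℕ} (x : Point M N) (j : Fin M) (h : 2 * j.val < 2 * M) :
    mOJZJ N k x ⟨2 * j.val, h⟩ = F1 N k (ones (x j)) := by
  rw [mOJZJ_eq]
  have h2 : (⟨2 * j.val, h⟩ : Fin (2 * M)).val % 2 = 0 := by simp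
  rw [if_pos h2]
  have hd : (⟨(⟨2 * j.val, h⟩ : Fin (2 * M)).val / 2, by omega⟩ : Fin M) = j := by
    apply Fin.ext; simp
  rw [hd]

lemma mOJZJ_odd (N k : ℕ) {M : ℕ} (x : Point M N) (j : Fin M) (h : 2 * j.val + 1 < 2 * M) :
    mOJZJ N k x ⟨2 * j.val + 1, h⟩ = F1 N k (zeros (x j)) := by
  rw [mOJZJ_eq]
  have h2 : ¬ (⟨2 * j.val + 1, h⟩ : Fin (2 * M)).val % 2 = 0 := by simp [Nat.add_mul_mod_self_left]
  rw [if_neg h2]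
  have hd : (⟨(⟨2 * j.val + 1, h⟩ : Fin (2 * M)).val / 2, by omega⟩ : Fin M) = j := by
    apply Fin.ext; simp; omega
  rw [hd]

def Vec (N k : ℕ) {M : ℕ} (t : Fin M → ℕ) : Fin (2 * M) → ℕ := fun i =>
  if i.val % 2 = 0 then k + t ⟨i.val / 2, by have := i.isLt; omega⟩
  else k + (N - t ⟨i.val / 2, by have := i.isLt; omega⟩)

lemma Vec_inj (N k : ℕ) {M : ℕ} : Function.Injective (Vec N k (M := M)) := by
  intro t t' h
  funext j
  have hi : 2 * j.val < 2 * M := by have := j.isLt; omega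
  have h2 := congrFun h ⟨2 * j.val, hi⟩
  unfold Vec at h2
  have he : (⟨2 * j.val, hi⟩ : Fin (2 * M)).val % 2 = 0 := by simp
  rw [if_pos he, if_pos he] at h2
  have hd : (⟨(⟨2 * j.val, hi⟩ : Fin (2 * M)).val / 2, by omega⟩ : Fin M) = j := by
    apply Fin.ext; simp
  rw [hd] at h2
  omega

variable {N k : ℕ} (hk : 2 ≤ k) (hkN : 2 * k ≤ N)
include hk hkN

lemma F1_opt {o : ℕ} (h : good N k o) (ho : o ≤ N) : F1 N k o = k + o := by
  unfold F1; unfold good at h; split_ifs <;> omega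

lemma F1_pair_le {o z : ℕ} (hoz : o + z = N) : F1 N k o + F1 N k z ≤ N + 2 * k := by
  unfold F1; split_ifs <;> omega

lemma F1_bad {o z : ℕ} (hoz : o + z = N) (hbad : ¬ good N k o) :
    F1 N k o < 2 * k ∧ F1 N k z < N := by
  unfold good at hbad; unfold F1; split_ifs <;> omega

lemma good_compl {o : ℕ} (h : good N k o) (ho : o ≤ N) : good N k (N - o) := by
  unfold good at *; omega

theorem po_iff {M : ℕ} (x : Point M N) :
    paretoOptimal N k x ↔ ∀ j, good N k (ones (x j)) := by
  constructor
  · intro hpo j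
    by_contra hbad
    apply hpo
    obtain ⟨b, hb⟩ := exists_ones (N := N) k (by omega)
    have hgb : good N k (ones b) := by unfold good; omega
    have hbz := ones_add_zeros b
    have hF1b : F1 N k (ones b) = k + k := by
      rw [F1_opt hk hkN hgb (by omega), hb]
    have hF2b : F1 N k (zeros b) = N := by
      have hz : zeros b = N - k := by omega
      have : good N k (N - k) := by unfold good; omega
      rw [hz, F1_opt hk hkN this (by omega)]; omega
    have hoz := ones_add_zeros (x j)
    have hxb := F1_bad hk hkN hoz hbad
    refine ⟨Function.update x j b, ?_, ?_⟩
    · intro i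
      rw [mOJZJ_eq, mOJZJ_eq]
      set j' : Fin M := ⟨i.val / 2, by have := i.isLt; omega⟩ with hj'
      by_cases hjj : j' = j
      · rw [hjj, Function.update_self]
        split_ifs <;> omega
      · rw [Function.update_of_ne hjj]
    · refine ⟨⟨2 * j.val, by have := j.isLt; omega⟩, ?_⟩
      rw [mOJZJ_even, mOJZJ_even, Function.update_self]
      omega
  · intro hg
    rintro ⟨y, hw, i, hi⟩
    set j : Fin M := ⟨i.val / 2, by have := i.isLt; omega⟩ with hj
    have hi0 : (2 * j.val) < 2 * M := by have := j.isLt; omega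
    have hi1 : (2 * j.val + 1) < 2 * M := by have := j.isLt; omega
    have h0 := hw ⟨2 * j.val, hi0⟩
    have h1 := hw ⟨2 * j.val + 1, hi1⟩
    rw [mOJZJ_even, mOJZJ_even] at h0
    rw [mOJZJ_odd, mOJZJ_odd] at h1
    have hozx := ones_add_zeros (x j)
    have hozy := ones_add_zeros (y j)
    have hgz : good N k (zeros (x j)) := by
      have := good_compl hk hkN (hg j) (by omega)
      rwa [show N - ones (x j) = zeros (x j) by omega] at this
    have hsx : F1 N k (ones (x j)) + F1 N k (zeros (x j)) = N + 2 * k := by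
      rw [F1_opt hk hkN (hg j) (by omega), F1_opt hk hkN hgz (by omega)]
      omega
    have hsy := F1_pair_le hk hkN (o := ones (y j)) (z := zeros (y j)) hozy
    have hi' : (if i.val % 2 = 0 then F1 N k (ones (x j)) else F1 N k (zeros (x j))) <
        (if i.val % 2 = 0 then F1 N k (ones (y j)) else F1 N k (zeros (y j))) := hi
    by_cases hpar : i.val % 2 = 0
    · rw [if_pos hpar, if_pos hpar] at hi'; omega
    · rw [if_neg hpar, if_neg hpar] at hi'; omega

omit hk hkN in
lemma mOJZJ_of_good {M : ℕ} (x : Point M N) (hk : 2 ≤ k) (hkN : 2 * k ≤ N)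
    (h : ∀ j, good N k (ones (x j))) :
    mOJZJ N k x = Vec N k (fun j => ones (x j)) := by
  funext i
  rw [mOJZJ_eq]
  unfold Vec
  set j : Fin M := ⟨i.val / 2, by have := i.isLt; omega⟩
  have hoz := ones_add_zeros (x j)
  split_ifs
  · exact F1_opt hk hkN (h j) (by omega)
  · have hz : zeros (x j) = N - ones (x j) := by omega
    rw [hz, F1_opt hk hkN (good_compl hk hkN (h j) (by omega)) (by omega)]

lemma front_eq (M : ℕ) :
    paretoFront N k M = Vec N k '' {t : Fin M → ℕ | ∀ j, good N k (t j)} := by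
  ext v
  constructor
  · rintro ⟨x, hpo, rfl⟩
    have hg := (po_iff hk hkN x).mp hpo
    exact ⟨fun j => ones (x j), hg, (mOJZJ_of_good x hk hkN hg).symm⟩
  · rintro ⟨t, ht, rfl⟩
    have hle : ∀ j, t j ≤ N := by
      intro j; have := ht j; unfold good at this; omega
    choose x hx using fun j => exists_ones (N := N) (t j) (hle j)
    have hg : ∀ j, good N k (ones (x j)) := by intro j; rw [hx j]; exact ht j
    refine ⟨x, (po_iff hk hkN x).mpr hg, ?_⟩
    rw [mOJZJ_of_good x hk hkN hg, show (fun j => ones (x j)) = t from funext hx]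

theorem front_card (M : ℕ) : (paretoFront N k M).ncard = (N - 2 * k + 3) ^ M := by
  classical
  rw [front_eq hk hkN M, Set.ncard_image_of_injective _ (Vec_inj N k)]
  have hset : {t : Fin M → ℕ | ∀ j, good N k (t j)} =
      ↑(Fintype.piFinset fun _ : Fin M => insert 0 (insert N (Finset.Icc k (N - k)))) := by
    ext t
    simp only [Set.mem_setOf_eq, Finset.mem_coe, Fintype.mem_piFinset,
      Finset.mem_insert, Finset.mem_Icc]
    apply forall_congr'
    intro j
    unfold good
    omega
  rw [hset, Set.ncard_coe_finset, Fintype.card_piFinset]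
  have hcard : (insert 0 (insert N (Finset.Icc k (N - k)))).card = N - 2 * k + 3 := by
    rw [Finset.card_insert_of_notMem, Finset.card_insert_of_notMem, Nat.card_Icc]
    · omega
    · simp only [Finset.mem_Icc]; omega
    · simp only [Finset.mem_insert, Finset.mem_Icc]; omega
  simp [hcard]

end PFC

/-- the Pareto front of `m`-OJZJ_k has cardinality `(N − 2k + 3)^(m/2)`. -/
theorem pareto_front_card (m n N k : ℕ) (hm : 2 ≤ m) (hme : m % 2 = 0)
    (hn : 0 < n) (hdvd : m / 2 ∣ n) (hN : N = 2 * n / m)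
    (hk2 : 2 ≤ k) (hkN : k ≤ N / 2) :
    (paretoFront N k (m / 2)).ncard = (N - 2 * k + 3) ^ (m / 2) := by
  exact PFC.front_card hk2 (by omega) (m / 2)
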